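/- Let d ∈ (0,1/2), let r < 0, and let f : (−∞, r] → ℝ be measurable and bounded on compact subsets, satisfying |f(s)| ≤ C(1 + (−s)^α) for all s ≤ r, for some constants C > 0 and 0 < α < 1−d. Then s ↦ (−s)^{d−2} f(s) is Lebesgue integrable on (−∞, r], and lim_{t→0, t∈(r,−r)\{0}} (1/t) ∫_{−∞}^r [ (t−s)^{d−1} − (−s)^{d−1} ] f(s) ds = (d−1) ∫_{−∞}^r (−s)^{d−2} f(s) ds. -/

import Mathlib

open MeasureTheory Filter

private lemma neg_rpow_integrable {q r : ℝ} (hq : q < -1) (hr : r < 0) :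
    IntegrableOn (fun s : ℝ => (-s) ^ q) (Set.Iic r) := by
  have h0 : (0:ℝ) < -r := by linarith
  have h := integrableOn_Ioi_rpow_of_lt hq h0
  have h2 : IntegrableOn ((fun u : ℝ => u ^ q) ∘ Neg.neg) (Neg.neg ⁻¹' (Set.Ioi (-r))) :=
    ((MeasurePreserving.integrableOn_comp_preimage (Measure.measurePreserving_neg _)
      (Homeomorph.neg ℝ).measurableEmbedding).2 h)
  have hset : (Neg.neg ⁻¹' (Set.Ioi (-r)) : Set ℝ) = Set.Iio r := by
    ext x; simp [lt_neg]
  rw [hset] at h2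
  rw [integrableOn_Iic_iff_integrableOn_Iio]
  exact h2

private lemma key_integrable {d r C α : ℝ} (hd0 : 0 < d) (hd : d < 1/2) (hr : r < 0)
    (hα : 0 < α) (hα' : α < 1 - d) (hC : 0 < C) {g : ℝ → ℝ} (hg : Measurable g)
    (hgrow : ∀ s ≤ r, |g s| ≤ C * (1 + (-s) ^ α)) :
    IntegrableOn (fun s => (-s) ^ (d - 2) * g s) (Set.Iic r) := by
  have h1 : IntegrableOn (fun s : ℝ => C * ((-s) ^ (d-2) + (-s) ^ (d-2+α))) (Set.Iic r) :=
    ((neg_rpow_integrable (by linarith) hr).add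
      (neg_rpow_integrable (by linarith) hr)).const_mul C
  refine Integrable.mono' h1 ?_ ?_
  · exact (Measurable.aestronglyMeasurable (by fun_prop)).restrict
  · rw [ae_restrict_iff' measurableSet_Iic]
    refine Filter.Eventually.of_forall (fun s hs => ?_)
    have hspos : (0:ℝ) < -s := by simp only [Set.mem_Iic] at hs; linarith
    have h2 : ‖(-s) ^ (d-2) * g s‖ = (-s) ^ (d-2) * |g s| := by
      rw [Real.norm_eq_abs, abs_mul, abs_of_nonneg (Real.rpow_nonneg hspos.le _)]
    rw [h2]
    calc (-s) ^ (d-2) * |g s| ≤ (-s) ^ (d-2) * (C * (1 + (-s) ^ α)) := by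
          exact mul_le_mul_of_nonneg_left (hgrow s hs) (Real.rpow_nonneg hspos.le _)
      _ = C * ((-s) ^ (d-2) + (-s) ^ (d-2+α)) := by
          rw [Real.rpow_add hspos]; ring

private lemma slope_mvt {d s t r : ℝ} (hd : d < 1) (hr : r < 0) (hs : s ≤ r)
    (ht : t ∈ Set.Ioo (r/2) (-(r/2))) (ht0 : t ≠ 0) :
    |((t - s) ^ (d-1) - (-s) ^ (d-1)) / t| ≤ (1 - d) * ((-s)/2) ^ (d - 2) := by
  set a := min 0 t with ha
  set b := max 0 t with hb
  have hab : a < b := min_lt_max.mpr (Ne.symm ht0)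
  have hkey : ∀ u ∈ Set.Icc a b, (-s)/2 ≤ u - s := by
    intro u hu
    have h1 : r/2 ≤ a := le_min (by linarith) ht.1.le
    have := hu.1
    have : r/2 ≤ u := le_trans h1 hu.1
    linarith
  have hspos : (0:ℝ) < -s := by linarith
  have hpos : ∀ u ∈ Set.Icc a b, (0:ℝ) < u - s := fun u hu => lt_of_lt_of_le
    (by linarith : (0:ℝ) < (-s)/2) (hkey u hu)
  have hcont : ContinuousOn (fun u : ℝ => (u - s) ^ (d-1)) (Set.Icc a b) :=
    ContinuousOn.rpow_const ((continuous_id.sub continuous_const).continuousOn)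
      (fun u hu => Or.inl (ne_of_gt (hpos u hu)))
  have hderiv : ∀ u ∈ Set.Ioo a b,
      HasDerivAt (fun u : ℝ => (u - s) ^ (d-1)) ((d-1) * (u - s) ^ (d-2)) u := by
    intro u hu
    have hne : u - s ≠ 0 := ne_of_gt (hpos u (Set.Ioo_subset_Icc_self hu))
    have h := HasDerivAt.comp u (Real.hasDerivAt_rpow_const (p := d-1) (Or.inl hne))
      ((hasDerivAt_id u).sub_const s)
    simp only [Function.comp, id_eq] at h
    have he : (d-1) * (u - s) ^ (d-1-1) * 1 = (d-1) * (u - s) ^ (d-2) := by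
      rw [show d-1-1 = d-2 by ring]; ring
    rwa [he] at h
  obtain ⟨c, hc, hceq⟩ := exists_hasDerivAt_eq_slope (fun u : ℝ => (u - s) ^ (d-1))
    (fun u => (d-1) * (u - s) ^ (d-2)) hab hcont hderiv
  have hslope : ((b - s) ^ (d-1) - (a - s) ^ (d-1)) / (b - a)
      = ((t - s) ^ (d-1) - (-s) ^ (d-1)) / t := by
    rcases ht0.lt_or_gt with h | h
    · rw [ha, hb, min_eq_right h.le, max_eq_left h.le, zero_sub, zero_sub, div_neg,
        ← neg_div, neg_sub]
    · rw [ha, hb, min_eq_left h.le, max_eq_right h.le, zero_sub, sub_zero]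
  rw [← hslope, ← hceq]
  have hcs : (-s)/2 ≤ c - s := hkey c (Set.Ioo_subset_Icc_self hc)
  have h1 : |(d-1) * (c - s) ^ (d-2)| = (1-d) * (c - s) ^ (d-2) := by
    rw [abs_mul, abs_of_nonneg (Real.rpow_nonneg (hpos c (Set.Ioo_subset_Icc_self hc)).le _),
      abs_of_neg (by linarith : d - 1 < 0)]
    ring_nf
  rw [h1]
  refine mul_le_mul_of_nonneg_left ?_ (by linarith)
  exact Real.rpow_le_rpow_of_nonpos (by linarith) hcs (by linarith)

theorem stmt_13 (d : ℝ) (hd : d ∈ Set.Ioo (0 : ℝ) (1 / 2)) (r : ℝ) (hr : r < 0)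
    (f : ℝ → ℝ) (hf : Measurable f)
    (hbd : ∀ K : Set ℝ, IsCompact K → K ⊆ Set.Iic r → ∃ M : ℝ, ∀ s ∈ K, |f s| ≤ M)
    (C α : ℝ) (hC : 0 < C) (hα : 0 < α) (hα' : α < 1 - d)
    (hgrowth : ∀ s ≤ r, |f s| ≤ C * (1 + (-s) ^ α)) :
    IntegrableOn (fun s => (-s) ^ (d - 2) * f s) (Set.Iic r)
    ∧ Tendsto
        (fun t : ℝ => (1 / t) * ∫ s in Set.Iic r, ((t - s) ^ (d - 1) - (-s) ^ (d - 1)) * f s)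
        (nhdsWithin 0 (Set.Ioo r (-r) \ {0}))
        (nhds ((d - 1) * ∫ s in Set.Iic r, (-s) ^ (d - 2) * f s)) := by
  obtain ⟨hd0, hd1⟩ := hd
  have hint : IntegrableOn (fun s => (-s) ^ (d - 2) * f s) (Set.Iic r) :=
    key_integrable hd0 hd1 hr hα hα' hC hf hgrowth
  refine ⟨hint, ?_⟩
  set l : Filter ℝ := nhdsWithin 0 (Set.Ioo r (-r) \ {0}) with hl
  -- bound function
  set bound : ℝ → ℝ :=
    fun s => ((1-d) * 2 ^ (2-d) * C) * ((-s) ^ (d-2) + (-s) ^ (d-2+α)) with hbound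
  have hbound_int : Integrable bound (volume.restrict (Set.Iic r)) :=
    ((neg_rpow_integrable (by linarith) hr).add
      (neg_rpow_integrable (by linarith) hr)).const_mul _
  -- DCT
  have hDCT : Tendsto
      (fun t : ℝ => ∫ s in Set.Iic r, (1/t) * (((t - s) ^ (d-1) - (-s) ^ (d-1)) * f s)) l
      (nhds (∫ s in Set.Iic r, ((d-1) * (-s) ^ (d-2)) * f s)) := by
    refine tendsto_integral_filter_of_dominated_convergence bound ?_ ?_ hbound_int ?_
    · exact Filter.Eventually.of_forall fun t =>
        (Measurable.aestronglyMeasurable (by fun_prop)).restrict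
    · have hmem : ∀ᶠ t in l, t ∈ Set.Ioo (r/2) (-(r/2)) ∧ t ≠ 0 := by
        have h1 : ∀ᶠ t in l, t ∈ Set.Ioo (r/2) (-(r/2)) :=
          mem_nhdsWithin_of_mem_nhds
            (Ioo_mem_nhds (by linarith) (by linarith))
        have h2 : ∀ᶠ t in l, t ∈ Set.Ioo r (-r) \ {0} := eventually_mem_nhdsWithin
        filter_upwards [h1, h2] with t ht1 ht2
        exact ⟨ht1, ht2.2⟩
      filter_upwards [hmem] with t ht
      rw [ae_restrict_iff' measurableSet_Iic]
      refine Filter.Eventually.of_forall (fun s hs => ?_)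
      simp only [Set.mem_Iic] at hs
      have hspos : (0:ℝ) < -s := by linarith
      have hmvt := slope_mvt (by linarith : d < 1) hr hs ht.1 ht.2
      have h1 : ‖(1/t) * (((t - s) ^ (d-1) - (-s) ^ (d-1)) * f s)‖
          = |((t - s) ^ (d-1) - (-s) ^ (d-1)) / t| * |f s| := by
        simp only [Real.norm_eq_abs, abs_mul, abs_div, abs_one]
        ring
      rw [h1]
      calc |((t - s) ^ (d-1) - (-s) ^ (d-1)) / t| * |f s|
          ≤ ((1 - d) * ((-s)/2) ^ (d - 2)) * (C * (1 + (-s) ^ α)) := by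
            refine mul_le_mul hmvt (hgrowth s hs) (abs_nonneg _) ?_
            exact mul_nonneg (by linarith) (Real.rpow_nonneg (by linarith) _)
        _ = bound s := by
            simp only [hbound]
            rw [Real.div_rpow hspos.le (by norm_num : (0:ℝ) ≤ 2),
              Real.rpow_add hspos,
              show (2:ℝ) ^ (2-d) = ((2:ℝ) ^ (d-2))⁻¹ by
                rw [← Real.rpow_neg (by norm_num : (0:ℝ) ≤ 2)]; norm_num]
            have h2 : ((2:ℝ) ^ (d-2)) ≠ 0 := ne_of_gt (Real.rpow_pos_of_pos (by norm_num) _)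
            field_simp
    · rw [ae_restrict_iff' measurableSet_Iic]
      refine Filter.Eventually.of_forall (fun s hs => ?_)
      simp only [Set.mem_Iic] at hs
      have hspos : (0:ℝ) < -s := by linarith
      have hder : HasDerivAt (fun t : ℝ => (t - s) ^ (d-1)) ((d-1) * (-s) ^ (d-2)) 0 := by
        have h := HasDerivAt.comp (0:ℝ)
          (Real.hasDerivAt_rpow_const (p := d-1) (x := (0:ℝ) - s)
            (Or.inl (by rw [zero_sub]; exact ne_of_gt hspos)))
          ((hasDerivAt_id (0:ℝ)).sub_const s)
        simp only [Function.comp, id_eq] at h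
        have he : (d-1) * ((0:ℝ) - s) ^ (d-1-1) * 1 = (d-1) * (-s) ^ (d-2) := by
          rw [zero_sub, show d-1-1 = d-2 by ring]; ring
        rwa [he] at h
      have hten := hasDerivAt_iff_tendsto_slope.mp hder
      have hle : l ≤ nhdsWithin 0 {(0:ℝ)}ᶜ :=
        nhdsWithin_mono 0 (fun x hx => hx.2)
      have hten2 : Tendsto (fun t : ℝ => ((t - s) ^ (d-1) - (-s) ^ (d-1)) / t) l
          (nhds ((d-1) * (-s) ^ (d-2))) := by
        refine (hten.mono_left hle).congr' ?_
        filter_upwards [eventually_mem_nhdsWithin] with t ht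
        simp only [slope_def_field]
        rw [zero_sub, sub_zero]
      have := hten2.mul_const (f s)
      refine this.congr (fun t => by ring)
  have heq1 : (fun t : ℝ => ∫ s in Set.Iic r, (1/t) * (((t - s) ^ (d-1) - (-s) ^ (d-1)) * f s))
      = fun t : ℝ => (1 / t) * ∫ s in Set.Iic r, ((t - s) ^ (d - 1) - (-s) ^ (d - 1)) * f s := by
    funext t
    exact integral_const_mul _ _
  have heq2 : (∫ s in Set.Iic r, ((d-1) * (-s) ^ (d-2)) * f s)
      = (d - 1) * ∫ s in Set.Iic r, (-s) ^ (d - 2) * f s := by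
    simp_rw [mul_assoc]
    exact integral_const_mul _ _
  rw [heq1, heq2] at hDCT
  exact hDCT
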